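/- Let A and B be equivalent finite categories. Then A admits a weighting if and only if B admits a weighting. -/
import Mathlib


open CategoryTheory Finset

private lemma card_hom_congr {C : Type*} [Category C] [∀ a b : C, Fintype (a ⟶ b)]
    {x y z w : C} (i : x ≅ y) (j : z ≅ w) :
    (Fintype.card (x ⟶ z) : ℚ) = Fintype.card (y ⟶ w) := by
  norm_cast
  exact Fintype.card_congr (Iso.homCongr i j)

private lemma weighting_transfer {A : Type u₁} [Category.{v₁} A] [Fintype A]
    [∀ a b : A, Fintype (a ⟶ b)]
    {B : Type u₂} [Category.{v₂} B] [Fintype B]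
    [∀ a b : B, Fintype (a ⟶ b)]
    (e : A ≌ B) (k : A → ℚ)
    (hk : ∀ a : A, ∑ b : A, (Fintype.card (a ⟶ b) : ℚ) * k b = 1) :
    ∃ l : B → ℚ, ∀ b : B, ∑ b' : B, (Fintype.card (b ⟶ b') : ℚ) * l b' = 1 := by
  classical
  set n : B → ℚ := fun b => ((univ.filter (fun b' : B => Nonempty (b' ≅ b))).card : ℚ)
    with hn
  have hnpos : ∀ b : B, 0 < n b := by
    intro b
    have hb : b ∈ univ.filter (fun b' : B => Nonempty (b' ≅ b)) := by
      simp only [mem_filter, mem_univ, true_and]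
      exact ⟨Iso.refl b⟩
    have := Finset.card_pos.mpr ⟨b, hb⟩
    simp only [hn]
    exact_mod_cast this
  have hniso : ∀ {b₁ b₂ : B}, (b₁ ≅ b₂) → n b₁ = n b₂ := by
    intro b₁ b₂ i
    simp only [hn]
    norm_cast
    congr 1
    apply Finset.filter_congr
    intro b' _
    exact ⟨fun ⟨j⟩ => ⟨j.trans i⟩, fun ⟨j⟩ => ⟨j.trans i.symm⟩⟩
  refine ⟨fun b => ∑ a : A, if Nonempty (e.functor.obj a ≅ b) then k a / n b else 0,
    fun b => ?_⟩
  have key : ∀ a : A,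
      ∑ b' : B, (Fintype.card (b ⟶ b') : ℚ) *
        (if Nonempty (e.functor.obj a ≅ b') then k a / n b' else 0)
      = (Fintype.card (b ⟶ e.functor.obj a) : ℚ) * k a := by
    intro a
    have : ∀ b' : B,
        (Fintype.card (b ⟶ b') : ℚ) *
          (if Nonempty (e.functor.obj a ≅ b') then k a / n b' else 0)
        = if Nonempty (b' ≅ e.functor.obj a) then
            (Fintype.card (b ⟶ e.functor.obj a) : ℚ) * k a / n (e.functor.obj a)
          else 0 := by
      intro b'
      by_cases h : Nonempty (b' ≅ e.functor.obj a)
      · obtain ⟨i⟩ := h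
        rw [if_pos ⟨i.symm⟩, if_pos ⟨i⟩, hniso i,
          card_hom_congr (Iso.refl b) i]
        ring
      · rw [if_neg h, if_neg (fun ⟨j⟩ => h ⟨j.symm⟩), mul_zero]
    rw [Finset.sum_congr rfl (fun b' _ => this b'), ← Finset.sum_filter,
      Finset.sum_const, nsmul_eq_mul]
    have hne : n (e.functor.obj a) ≠ 0 := (hnpos _).ne'
    rw [hn] at hne ⊢
    field_simp
  calc ∑ b' : B, (Fintype.card (b ⟶ b') : ℚ) *
        ∑ a : A, (if Nonempty (e.functor.obj a ≅ b') then k a / n b' else 0)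
      = ∑ a : A, ∑ b' : B, (Fintype.card (b ⟶ b') : ℚ) *
          (if Nonempty (e.functor.obj a ≅ b') then k a / n b' else 0) := by
        rw [Finset.sum_comm]
        exact Finset.sum_congr rfl fun b' _ => Finset.mul_sum _ _ _
    _ = ∑ a : A, (Fintype.card (b ⟶ e.functor.obj a) : ℚ) * k a :=
        Finset.sum_congr rfl fun a _ => key a
    _ = ∑ a : A, (Fintype.card (e.inverse.obj b ⟶ a) : ℚ) * k a := by
        refine Finset.sum_congr rfl fun a _ => ?_
        congr 1
        norm_cast
        exact Fintype.card_congr (e.symm.toAdjunction.homEquiv b a).symm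
    _ = 1 := hk _

/-- **Lemma 1.10** (Leinster). If `A` and `B` are equivalent finite
categories, then `A` admits a weighting if and only if `B` does. -/
theorem stmt_5 {A : Type u₁} [Category.{v₁} A] [Fintype A]
    [∀ a b : A, Fintype (a ⟶ b)]
    {B : Type u₂} [Category.{v₂} B] [Fintype B]
    [∀ a b : B, Fintype (a ⟶ b)]
    (e : A ≌ B) :
    (∃ k : A → ℚ, ∀ a : A, ∑ b : A, (Fintype.card (a ⟶ b) : ℚ) * k b = 1) ↔
    (∃ l : B → ℚ, ∀ a : B, ∑ b : B, (Fintype.card (a ⟶ b) : ℚ) * l b = 1) := by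
  exact ⟨fun ⟨k, hk⟩ => weighting_transfer e k hk,
    fun ⟨l, hl⟩ => weighting_transfer e.symm l hl⟩
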